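/- Let D = (A,B) be any orientation of the complete bipartite graph K_{n,m} with n ≤ m, and let r be a positive integer with n ≥ r·2^r·(1 + 1/2^r)^r + 2r − 1. Then dib(D) ≥ r. -/

import Mathlib

open Classical

/-- A closed directed walk of length `n+1` inside the set `S`. -/
def IsClosedWalkIn {V : Type*} (E : V → V → Prop) (S : Set V) (n : ℕ)
    (c : Fin (n + 1) → V) : Prop :=
  (∀ i, c i ∈ S) ∧ ∀ i : Fin (n + 1), E (c i) (c (i + 1))

/-- The set `S` induces no directed cycle (equivalently, no closed directed walk). -/
def AcyclicSet {V : Type*} (E : V → V → Prop) (S : Set V) : Prop :=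
  ¬ ∃ (n : ℕ) (c : Fin (n + 1) → V), IsClosedWalkIn E S n c

/-- An acyclic coloring: every color class induces no directed cycle. -/
def AcyclicColoring {V : Type*} (E : V → V → Prop) {k : ℕ} (Γ : V → Fin k) : Prop :=
  ∀ i : Fin k, AcyclicSet E {v | Γ v = i}

/-- `u` is a b⁺-vertex: it has an out-neighbor of every other color. -/
def IsBPlus {V : Type*} (E : V → V → Prop) {k : ℕ} (Γ : V → Fin k) (u : V) : Prop :=
  ∀ j : Fin k, j ≠ Γ u → ∃ w, E u w ∧ Γ w = j

/-- `u` is a b⁻-vertex: it has an in-neighbor of every other color. -/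
def IsBMinus {V : Type*} (E : V → V → Prop) {k : ℕ} (Γ : V → Fin k) (u : V) : Prop :=
  ∀ j : Fin k, j ≠ Γ u → ∃ w, E w u ∧ Γ w = j

/-- A b-coloring: an acyclic coloring in which every color class contains a
b⁺-vertex and a b⁻-vertex. -/
def IsBColoring {V : Type*} (E : V → V → Prop) {k : ℕ} (Γ : V → Fin k) : Prop :=
  AcyclicColoring E Γ ∧
    ∀ i : Fin k, (∃ u, Γ u = i ∧ IsBPlus E Γ u) ∧ (∃ u, Γ u = i ∧ IsBMinus E Γ u)

/-- The dib-chromatic number: the maximum number of colors of a b-coloring. -/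
noncomputable def dib {V : Type*} (E : V → V → Prop) : ℕ :=
  sSup {k | ∃ Γ : V → Fin k, IsBColoring E Γ}

/-- The dichromatic number: the minimum number of colors of an acyclic coloring. -/
noncomputable def dc {V : Type*} (E : V → V → Prop) : ℕ :=
  sInf {k | ∃ Γ : V → Fin k, AcyclicColoring E Γ}

/-- Out-degree. -/
noncomputable def outDeg {V : Type*} (E : V → V → Prop) (v : V) : ℕ := {w | E v w}.ncard

/-- In-degree. -/
noncomputable def inDeg {V : Type*} (E : V → V → Prop) (v : V) : ℕ := {w | E w v}.ncard

/-- `(A, B)` is a bipartition of the digraph: the parts are disjoint independent sets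
covering all vertices, and every arc goes between the parts. -/
def IsBipartition {V : Type*} (E : V → V → Prop) (A B : Set V) : Prop :=
  Disjoint A B ∧ A ∪ B = Set.univ ∧
    ∀ u v, E u v → (u ∈ A ∧ v ∈ B) ∨ (u ∈ B ∧ v ∈ A)

/-- The digraph is weakly connected. -/
def WeaklyConnected {V : Type*} (E : V → V → Prop) : Prop :=
  ∀ u v : V, Relation.ReflTransGen (fun a b => E a b ∨ E b a) u v

/-- The set `S` is weakly connected in the induced subdigraph. -/
def WeaklyConnectedOn {V : Type*} (E : V → V → Prop) (S : Set V) : Prop :=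
  ∀ ⦃u⦄, u ∈ S → ∀ ⦃v⦄, v ∈ S →
    Relation.ReflTransGen (fun a b => (E a b ∨ E b a) ∧ a ∈ S ∧ b ∈ S) u v

/-- A simple digraph (oriented graph): no digons. -/
def SimpleDigraph' {V : Type*} (E : V → V → Prop) : Prop :=
  ∀ u v, E u v → ¬ E v u

section AuxLemmas

variable {V : Type*}

lemma bip_symm {E : V → V → Prop} {A B : Set V} (h : IsBipartition E A B) :
    IsBipartition E B A :=
  ⟨h.1.symm, by rw [Set.union_comm]; exact h.2.1, fun u v huv => (h.2.2 u v huv).symm⟩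

lemma acyclic_oneB {E : V → V → Prop} {A B : Set V} (hbip : IsBipartition E A B)
    (hsimple : SimpleDigraph' E) (S : Set V) (w : V) (hw : ∀ v ∈ S, v ∈ B → v = w) :
    AcyclicSet E S := by
  rintro ⟨n, c, hc, he⟩
  obtain ⟨disj, cover, harc⟩ := hbip
  have hAB : ∀ v : V, v ∈ A ∨ v ∈ B := by
    intro v
    have : v ∈ A ∪ B := by rw [cover]; trivial
    exact this
  have hnb : ∀ v, v ∈ A → v ∈ B → False := fun v h1 h2 => Set.disjoint_left.mp disj h1 h2
  have step1 : ∀ i, c i ∈ A → c (i + 1) = w := by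
    intro i hA
    rcases harc _ _ (he i) with ⟨_, hB⟩ | ⟨hB, _⟩
    · exact hw _ (hc _) hB
    · exact absurd hB (fun h => hnb _ hA h)
  have step2 : ∀ i, c i ∈ B → c (i + 1) ∈ A := by
    intro i hB
    rcases harc _ _ (he i) with ⟨hA, _⟩ | ⟨_, hA⟩
    · exact absurd hB (hnb _ hA)
    · exact hA
  have key : ∀ i, c i ∈ A → False := by
    intro i hA
    have h1 : c (i + 1) = w := step1 i hA
    have h1B : c (i + 1) ∈ B := by
      rcases harc _ _ (he i) with ⟨_, hB⟩ | ⟨hB, _⟩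
      · exact hB
      · exact absurd hB (hnb _ hA)
    have h2A : c (i + 1 + 1) ∈ A := step2 _ h1B
    have h3 : c (i + 1 + 1 + 1) = w := step1 _ h2A
    have e1 := he (i + 1)
    have e2 := he (i + 1 + 1)
    rw [h1] at e1
    rw [h3] at e2
    exact hsimple _ _ e1 e2
  rcases hAB (c 0) with h | h
  · exact key 0 h
  · exact key _ (step2 0 h)

lemma convex_choose (r : ℕ) : ∀ d p q : ℕ, q - p ≤ d → p ≤ q →
    2 * Nat.choose ((p + q) / 2) r ≤ p.choose r + q.choose r := by
  intro d
  induction d with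
  | zero =>
    intro p q h hpq
    have hpq' : p = q := by omega
    subst hpq'
    have hm : (p + p) / 2 = p := by omega
    rw [hm]; omega
  | succ d ih =>
    intro p q h hpq
    by_cases hq : q ≤ p + 1
    · have hmid : (p + q) / 2 = p := by omega
      rw [hmid]
      have := Nat.choose_le_choose r hpq
      omega
    · obtain ⟨q', rfl⟩ : ∃ q', q = q' + 1 := ⟨q - 1, by omega⟩
      have ihh := ih (p + 1) q' (by omega) (by omega)
      have hmid : (p + 1 + q') / 2 = (p + (q' + 1)) / 2 := by omega
      rw [hmid] at ihh
      rcases r with _ | s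
      · simp only [Nat.choose_zero_right] at *
        omega
      · have e1 : (p + 1).choose (s + 1) = p.choose s + p.choose (s + 1) :=
          Nat.choose_succ_succ p s
        have e2 : (q' + 1).choose (s + 1) = q'.choose s + q'.choose (s + 1) :=
          Nat.choose_succ_succ q' s
        have e3 : p.choose s ≤ q'.choose s := Nat.choose_le_choose s (by omega)
        calc 2 * Nat.choose ((p + (q' + 1)) / 2) (s + 1)
            ≤ (p + 1).choose (s + 1) + q'.choose (s + 1) := ihh
          _ ≤ p.choose (s + 1) + (q' + 1).choose (s + 1) := by
              rw [e1, e2]; omega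

lemma double_count (E : V → V → Prop) (Af Bf : Finset V) (r : ℕ) :
    ∑ b ∈ Bf, ((Af.filter (fun a => E a b)).card.choose r)
      = ∑ S ∈ Af.powersetCard r, (Bf.filter (fun b => ∀ a ∈ S, E a b)).card := by
  classical
  have h1 : ∀ b, (Af.filter (fun a => E a b)).card.choose r
      = ((Af.powersetCard r).filter (fun S => ∀ a ∈ S, E a b)).card := by
    intro b
    rw [← Finset.card_powersetCard]
    congr 1
    ext S
    simp only [Finset.mem_powersetCard, Finset.mem_filter, Finset.subset_iff]
    constructor
    · rintro ⟨hsub, hcard⟩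
      exact ⟨⟨fun x hx => (hsub hx).1, hcard⟩, fun a ha => (hsub ha).2⟩
    · rintro ⟨⟨hsub, hcard⟩, hall⟩
      exact ⟨fun x hx => ⟨hsub hx, hall x hx⟩, hcard⟩
  simp_rw [h1, Finset.card_filter]
  exact Finset.sum_comm

lemma numeric {r n : ℕ} (hr : 1 ≤ r)
    (hineq : (r : ℝ) * 2 ^ r * (1 + 1 / 2 ^ r) ^ r + 2 * (r : ℝ) - 1 ≤ (n : ℝ)) :
    (r - 1) * n.choose r < n * Nat.choose (n / 2) r := by
  have h2pos : (0:ℝ) < 2 ^ r := by positivity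
  have hXpow : (1:ℝ) ≤ (1 + 1 / 2 ^ r) ^ r := by
    apply one_le_pow₀
    have : (0:ℝ) ≤ 1 / 2 ^ r := by positivity
    linarith
  have hr1 : (1:ℝ) ≤ r := by exact_mod_cast hr
  have h2r2 : (2:ℝ) ≤ 2 ^ r := by
    calc (2:ℝ) = 2 ^ 1 := by norm_num
    _ ≤ 2 ^ r := by apply pow_le_pow_right₀ (by norm_num) hr
  have hY2 : (2:ℝ) ≤ 2 ^ r * (1 + 1 / 2 ^ r) ^ r := by nlinarith
  have hineq' : (r:ℝ) * (2 ^ r * (1 + 1 / 2 ^ r) ^ r) + 2 * (r:ℝ) - 1 ≤ (n:ℝ) := by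
    linarith [hineq, (by ring : (r:ℝ) * 2 ^ r * (1 + 1 / 2 ^ r) ^ r
      = (r:ℝ) * (2 ^ r * (1 + 1 / 2 ^ r) ^ r))]
  have hn2r : 2 * (r:ℝ) ≤ n := by nlinarith
  have hnn : 2 * r ≤ n := by exact_mod_cast hn2r
  have hh : r ≤ n / 2 := (Nat.le_div_iff_mul_le (by norm_num)).mpr (by omega)
  have hrn : r ≤ n := by omega
  set h := n / 2 with hhdef
  have hhcast : (n:ℝ) - 1 ≤ 2 * (h:ℝ) := by
    have h1 : n ≤ 2 * h + 1 := by omega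
    have h2 : (n:ℝ) ≤ 2 * (h:ℝ) + 1 := by exact_mod_cast h1
    linarith
  have hfac : ∀ i ∈ Finset.range r, ((n:ℝ) - i) ≤ (2 * (1 + 1 / 2 ^ r)) * ((h:ℝ) - i) := by
    intro i hi
    have hir : i < r := Finset.mem_range.mp hi
    have hi' : (i:ℝ) + 1 ≤ r := by exact_mod_cast hir
    have key : (2:ℝ) ^ r * ((i:ℝ) + 1) ≤ (n:ℝ) - 1 - 2 * i := by
      have h1 : (2:ℝ) ^ r * ((i:ℝ) + 1) ≤ 2 ^ r * r := by nlinarith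
      have h2a : (2:ℝ) ^ r ≤ 2 ^ r * (1 + 1 / 2 ^ r) ^ r := by nlinarith
      have h2 : (r:ℝ) * 2 ^ r ≤ (r:ℝ) * (2 ^ r * (1 + 1 / 2 ^ r) ^ r) :=
        mul_le_mul_of_nonneg_left h2a (by linarith)
      linarith
    have hstep1 : (n:ℝ) - i ≤ (1 + 1 / 2 ^ r) * ((n:ℝ) - 1 - 2 * i) := by
      have hdiv : (i:ℝ) + 1 ≤ ((n:ℝ) - 1 - 2 * i) / 2 ^ r := by
        rw [le_div_iff₀ h2pos]; nlinarith
      have e : (1 + 1 / 2 ^ r) * ((n:ℝ) - 1 - 2 * i)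
          = ((n:ℝ) - 1 - 2 * i) + ((n:ℝ) - 1 - 2 * i) / 2 ^ r := by
        field_simp
      rw [e]; linarith
    have hstep2 : ((n:ℝ) - 1 - 2 * i) ≤ 2 * ((h:ℝ) - i) := by linarith
    have hpos' : (0:ℝ) ≤ 1 + 1 / 2 ^ r := by positivity
    calc (n:ℝ) - i ≤ (1 + 1 / 2 ^ r) * ((n:ℝ) - 1 - 2 * i) := hstep1
      _ ≤ (1 + 1 / 2 ^ r) * (2 * ((h:ℝ) - i)) := mul_le_mul_of_nonneg_left hstep2 hpos'
      _ = (2 * (1 + 1 / 2 ^ r)) * ((h:ℝ) - i) := by ring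
  have e1 : (n.descFactorial r : ℝ) = ∏ i ∈ Finset.range r, ((n:ℝ) - i) := by
    rw [Nat.descFactorial_eq_prod_range, Nat.cast_prod]
    refine Finset.prod_congr rfl fun i hi => ?_
    have : i ≤ n := le_of_lt (lt_of_lt_of_le (Finset.mem_range.mp hi) hrn)
    rw [Nat.cast_sub this]
  have e2 : (h.descFactorial r : ℝ) = ∏ i ∈ Finset.range r, ((h:ℝ) - i) := by
    rw [Nat.descFactorial_eq_prod_range, Nat.cast_prod]
    refine Finset.prod_congr rfl fun i hi => ?_
    have : i ≤ h := le_of_lt (lt_of_lt_of_le (Finset.mem_range.mp hi) hh)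
    rw [Nat.cast_sub this]
  have hprod : (n.descFactorial r : ℝ) ≤ (2 * (1 + 1 / 2 ^ r)) ^ r * (h.descFactorial r : ℝ) := by
    rw [e1, e2]
    calc ∏ i ∈ Finset.range r, ((n:ℝ) - i)
        ≤ ∏ i ∈ Finset.range r, ((2 * (1 + 1 / 2 ^ r)) * ((h:ℝ) - i)) := by
          apply Finset.prod_le_prod
          · intro i hi
            have hirn : (i:ℝ) + 1 ≤ n := by
              exact_mod_cast lt_of_lt_of_le (Finset.mem_range.mp hi) hrn
            linarith
          · exact hfac
      _ = (2 * (1 + 1 / 2 ^ r)) ^ r * ∏ i ∈ Finset.range r, ((h:ℝ) - i) := by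
          rw [Finset.prod_mul_distrib, Finset.prod_const, Finset.card_range]
  have hdpos : 0 < (h.descFactorial r : ℝ) := by
    have : 0 < h.descFactorial r := by
      rcases Nat.eq_zero_or_pos (h.descFactorial r) with h0 | h0
      · exact absurd (Nat.descFactorial_eq_zero_iff_lt.mp h0) (by omega)
      · exact h0
    exact_mod_cast this
  have hlt : ((r:ℝ) - 1) * (2 * (1 + 1 / 2 ^ r)) ^ r < n := by
    have e : (2 * (1 + 1 / 2 ^ r) : ℝ) ^ r = 2 ^ r * (1 + 1 / 2 ^ r) ^ r := mul_pow _ _ _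
    rw [e]
    nlinarith
  have final : ((r : ℕ) - 1 : ℕ) * n.descFactorial r < n * h.descFactorial r := by
    rw [← Nat.cast_lt (α := ℝ)]
    push_cast [Nat.cast_sub hr]
    calc ((r:ℝ) - 1) * (n.descFactorial r : ℝ)
        ≤ ((r:ℝ) - 1) * ((2 * (1 + 1 / 2 ^ r)) ^ r * (h.descFactorial r : ℝ)) :=
          mul_le_mul_of_nonneg_left hprod (by linarith)
      _ = (((r:ℝ) - 1) * (2 * (1 + 1 / 2 ^ r)) ^ r) * (h.descFactorial r : ℝ) := by ring
      _ < (n:ℝ) * (h.descFactorial r : ℝ) := mul_lt_mul_of_pos_right hlt hdpos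
  rw [Nat.descFactorial_eq_factorial_mul_choose, Nat.descFactorial_eq_factorial_mul_choose] at final
  apply Nat.lt_of_mul_lt_mul_left (a := r.factorial)
  calc r.factorial * ((r - 1) * n.choose r) = (r - 1) * (r.factorial * n.choose r) := by ring
    _ < n * (r.factorial * Nat.choose (n / 2) r) := final
    _ = r.factorial * (n * Nat.choose (n / 2) r) := by ring

lemma le_dib_of [Fintype V] (E : V → V → Prop) {k r : ℕ}
    (hk : ∃ Γ : V → Fin k, IsBColoring E Γ) (hrk : r ≤ k) : r ≤ dib E := by
  refine hrk.trans (le_csSup ⟨Fintype.card V, ?_⟩ hk)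
  rintro k' ⟨Γ, hΓ⟩
  have hsurj : Function.Surjective Γ := fun i =>
    ⟨(hΓ.2 i).1.choose, (hΓ.2 i).1.choose_spec.1⟩
  calc k' = Fintype.card (Fin k') := (Fintype.card_fin k').symm
    _ ≤ Fintype.card V := Fintype.card_le_of_surjective Γ hsurj

lemma bcoloring_oneway {E : V → V → Prop} {A B : Set V} (hbip : IsBipartition E A B)
    (hsimple : SimpleDigraph' E) {r : ℕ} (hr2 : 2 ≤ r) (x y : Fin r → V)
    (hxinj : Function.Injective x) (hyinj : Function.Injective y)
    (hxA : ∀ i, x i ∈ A) (hyB : ∀ i, y i ∈ B)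
    (hE : ∀ i j, E (x i) (y j)) : ∃ Γ : V → Fin r, IsBColoring E Γ := by
  classical
  have hnb : ∀ v, v ∈ A → v ∈ B → False := fun v h1 h2 => Set.disjoint_left.mp hbip.1 h1 h2
  have hAB : ∀ v : V, v ∈ A ∨ v ∈ B := by
    intro v
    have : v ∈ A ∪ B := by rw [hbip.2.1]; trivial
    exact this
  set c0 : Fin r := ⟨0, by omega⟩ with hc0
  set c1 : Fin r := ⟨1, by omega⟩ with hc1
  have hc01 : c0 ≠ c1 := by simp [hc0, hc1, Fin.ext_iff]
  set Γ : V → Fin r := fun v =>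
    if h : ∃ i, x i = v then h.choose
    else if h : ∃ i, y i = v then h.choose
    else if v ∈ A then c0 else c1 with hΓdef
  have Γx : ∀ i, Γ (x i) = i := by
    intro i
    have h : ∃ j, x j = x i := ⟨i, rfl⟩
    simp only [hΓdef, dif_pos h]
    exact hxinj h.choose_spec
  have Γy : ∀ i, Γ (y i) = i := by
    intro i
    have h1 : ¬∃ j, x j = y i := by
      rintro ⟨j, hj⟩
      exact hnb (y i) (hj ▸ hxA j) (hyB i)
    have h : ∃ j, y j = y i := ⟨i, rfl⟩
    simp only [hΓdef, dif_neg h1, dif_pos h]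
    exact hyinj h.choose_spec
  have ΓA : ∀ v ∈ A, (¬∃ i, x i = v) → Γ v = c0 := by
    intro v hv hnx
    have h2 : ¬∃ i, y i = v := by
      rintro ⟨j, hj⟩
      exact hnb v hv (hj ▸ hyB j)
    simp only [hΓdef, dif_neg hnx, dif_neg h2, if_pos hv]
  have ΓB : ∀ v ∈ B, (¬∃ i, y i = v) → Γ v = c1 := by
    intro v hv hny
    have h1 : ¬∃ i, x i = v := by
      rintro ⟨j, hj⟩
      exact hnb v (hj ▸ hxA j) hv
    have h3 : v ∉ A := fun h => hnb v h hv
    simp only [hΓdef, dif_neg h1, dif_neg hny, if_neg h3]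
  refine ⟨Γ, ?_, ?_⟩
  · intro i
    by_cases hi : i = c1
    · apply acyclic_oneB (bip_symm hbip) hsimple _ (x i)
      intro v hv hvA
      by_cases hx : ∃ j, x j = v
      · obtain ⟨j, rfl⟩ := hx
        have := Γx j
        rw [hv] at this
        rw [this]
      · exfalso
        have := ΓA v hvA hx
        rw [hv] at this
        exact hc01 (hi ▸ this.symm)
    · apply acyclic_oneB hbip hsimple _ (y i)
      intro v hv hvB
      by_cases hy : ∃ j, y j = v
      · obtain ⟨j, rfl⟩ := hy
        have := Γy j
        rw [hv] at this
        rw [this]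
      · exfalso
        rcases hAB v with hvA | _
        · exact hnb v hvA hvB
        · have := ΓB v hvB hy
          rw [hv] at this
          exact hi this
  · intro i
    constructor
    · exact ⟨x i, Γx i, fun j _ => ⟨y j, hE i j, Γy j⟩⟩
    · exact ⟨y i, Γy i, fun j _ => ⟨x j, hE j i, Γx j⟩⟩

lemma exists_oneway [Fintype V] {E : V → V → Prop} {A B : Set V}
    (hbip : IsBipartition E A B) (hsimple : SimpleDigraph' E)
    (horient : ∀ a ∈ A, ∀ b ∈ B, E a b ∨ E b a)
    {n m r : ℕ} (hA : A.ncard = n) (hB : B.ncard = m) (hnm : n ≤ m) (hr : 1 ≤ r)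
    (hineq : (r : ℝ) * 2 ^ r * (1 + 1 / 2 ^ r) ^ r + 2 * (r : ℝ) - 1 ≤ (n : ℝ)) :
    ∃ S T : Finset V, S.card = r ∧ T.card = r ∧ (∀ a ∈ S, a ∈ A) ∧ (∀ b ∈ T, b ∈ B) ∧
      ((∀ a ∈ S, ∀ b ∈ T, E a b) ∨ (∀ a ∈ S, ∀ b ∈ T, E b a)) := by
  classical
  set Af := A.toFinset with hAfdef
  set Bf := B.toFinset with hBfdef
  have hAf : Af.card = n := by rw [← hA]; exact (Set.ncard_eq_toFinset_card' A).symm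
  have hBf : Bf.card = m := by rw [← hB]; exact (Set.ncard_eq_toFinset_card' B).symm
  by_contra hno
  have hbound1 : ∀ S ∈ Af.powersetCard r,
      (Bf.filter (fun b => ∀ a ∈ S, E a b)).card ≤ r - 1 := by
    intro S hS
    by_contra hgt
    have hge : r ≤ (Bf.filter (fun b => ∀ a ∈ S, E a b)).card := by omega
    obtain ⟨T, hTsub, hTcard⟩ := Finset.exists_subset_card_eq hge
    obtain ⟨hSsub, hScard⟩ := Finset.mem_powersetCard.mp hS
    refine hno ⟨S, T, hScard, hTcard, ?_, ?_, Or.inl ?_⟩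
    · intro a ha; exact Set.mem_toFinset.mp (hSsub ha)
    · intro b hb; exact Set.mem_toFinset.mp (Finset.filter_subset _ _ (hTsub hb))
    · intro a ha b hb; exact (Finset.mem_filter.mp (hTsub hb)).2 a ha
  have hbound2 : ∀ S ∈ Af.powersetCard r,
      (Bf.filter (fun b => ∀ a ∈ S, E b a)).card ≤ r - 1 := by
    intro S hS
    by_contra hgt
    have hge : r ≤ (Bf.filter (fun b => ∀ a ∈ S, E b a)).card := by omega
    obtain ⟨T, hTsub, hTcard⟩ := Finset.exists_subset_card_eq hge
    obtain ⟨hSsub, hScard⟩ := Finset.mem_powersetCard.mp hS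
    refine hno ⟨S, T, hScard, hTcard, ?_, ?_, Or.inr ?_⟩
    · intro a ha; exact Set.mem_toFinset.mp (hSsub ha)
    · intro b hb; exact Set.mem_toFinset.mp (Finset.filter_subset _ _ (hTsub hb))
    · intro a ha b hb; exact (Finset.mem_filter.mp (hTsub hb)).2 a ha
  have hdeg : ∀ b ∈ Bf,
      (Af.filter (fun a => E a b)).card + (Af.filter (fun a => E b a)).card = n := by
    intro b hb
    have hbB : b ∈ B := Set.mem_toFinset.mp hb
    have heq : Af.filter (fun a => E b a) = Af.filter (fun a => ¬ E a b) := by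
      apply Finset.filter_congr
      intro a ha
      have haA : a ∈ A := Set.mem_toFinset.mp ha
      constructor
      · intro h h'
        exact hsimple a b h' h
      · intro h
        rcases horient a haA b hbB with h' | h'
        · exact absurd h' h
        · exact h'
    rw [heq, Finset.card_filter_add_card_filter_not]
    exact hAf
  have hconv : ∀ b ∈ Bf, 2 * Nat.choose (n / 2) r ≤
      (Af.filter (fun a => E a b)).card.choose r
        + (Af.filter (fun a => E b a)).card.choose r := by
    intro b hb
    have hpq := hdeg b hb
    set p := (Af.filter (fun a => E a b)).card with hp
    set q := (Af.filter (fun a => E b a)).card with hq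
    rcases le_total p q with hle | hle
    · have := convex_choose r (q - p) p q le_rfl hle
      rw [hpq] at this
      exact this
    · have := convex_choose r (p - q) q p le_rfl hle
      rw [show q + p = n by omega] at this
      omega
  have hcardS : (Af.powersetCard r).card = n.choose r := by
    rw [Finset.card_powersetCard, hAf]
  have hsum1 : ∑ b ∈ Bf, ((Af.filter (fun a => E a b)).card.choose r)
      ≤ n.choose r * (r - 1) := by
    rw [double_count]
    refine le_trans (Finset.sum_le_sum (g := fun _ => r - 1) (fun S hS => ?_)) ?_
    · convert hbound1 S hS using 2
      rfl
      exact Finset.filter_congr_decidable _ _ _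

    rw [Finset.sum_const, hcardS, smul_eq_mul]
  have hsum2 : ∑ b ∈ Bf, ((Af.filter (fun a => E b a)).card.choose r)
      ≤ n.choose r * (r - 1) := by
    rw [double_count (fun a b => E b a) Af Bf r]
    refine le_trans (Finset.sum_le_sum (g := fun _ => r - 1) (fun S hS => ?_)) ?_
    · convert hbound2 S hS using 2
      rfl
      exact Finset.filter_congr_decidable _ _ _

    rw [Finset.sum_const, hcardS, smul_eq_mul]
  have hlow : Bf.card * (2 * Nat.choose (n / 2) r)
      ≤ ∑ b ∈ Bf, ((Af.filter (fun a => E a b)).card.choose r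
        + (Af.filter (fun a => E b a)).card.choose r) := by
    have := Finset.card_nsmul_le_sum Bf
      (fun b => (Af.filter (fun a => E a b)).card.choose r
        + (Af.filter (fun a => E b a)).card.choose r)
      (2 * Nat.choose (n / 2) r) hconv
    simpa [smul_eq_mul] using this
  rw [Finset.sum_add_distrib] at hlow
  have hnum : (r - 1) * n.choose r < n * Nat.choose (n / 2) r := numeric hr hineq
  have hmn : n * (2 * Nat.choose (n / 2) r) ≤ Bf.card * (2 * Nat.choose (n / 2) r) := by
    apply Nat.mul_le_mul_right
    omega
  have hfinal : n * (2 * Nat.choose (n / 2) r) ≤ 2 * (n.choose r * (r - 1)) := by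
    calc n * (2 * Nat.choose (n / 2) r) ≤ Bf.card * (2 * Nat.choose (n / 2) r) := hmn
      _ ≤ _ + _ := hlow
      _ ≤ n.choose r * (r - 1) + n.choose r * (r - 1) := Nat.add_le_add hsum1 hsum2
      _ = 2 * (n.choose r * (r - 1)) := by ring
  have h1 : n * (2 * Nat.choose (n / 2) r) = 2 * (n * Nat.choose (n / 2) r) := by ring
  have h2 : n.choose r * (r - 1) = (r - 1) * n.choose r := by ring
  omega

end AuxLemmas

/-- any orientation of K_{n,m} with n ≤ m and
n ≥ r·2^r·(1 + 1/2^r)^r + 2r − 1 has dib ≥ r. -/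
theorem stmt17 {V : Type*} [Fintype V] (E : V → V → Prop) (A B : Set V)
    (hbip : IsBipartition E A B) (hsimple : SimpleDigraph' E)
    (horient : ∀ a ∈ A, ∀ b ∈ B, E a b ∨ E b a)
    (n m : ℕ) (hA : A.ncard = n) (hB : B.ncard = m) (hnm : n ≤ m)
    (r : ℕ) (hr : 1 ≤ r)
    (hineq : (r : ℝ) * 2 ^ r * (1 + 1 / 2 ^ r) ^ r + 2 * (r : ℝ) - 1 ≤ (n : ℝ)) :
    r ≤ dib E := by
  classical
  have hnb : ∀ v, v ∈ A → v ∈ B → False := fun v h1 h2 => Set.disjoint_left.mp hbip.1 h1 h2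
  have hAB : ∀ v : V, v ∈ A ∨ v ∈ B := by
    intro v
    have : v ∈ A ∪ B := by rw [hbip.2.1]; trivial
    exact this
  by_cases hr2 : 2 ≤ r
  · -- main case via one-way K_{r,r}
    obtain ⟨S, T, hScard, hTcard, hSA, hTB, hdir⟩ :=
      exists_oneway hbip hsimple horient hA hB hnm hr hineq
    let ex := S.equivFinOfCardEq hScard
    let ey := T.equivFinOfCardEq hTcard
    set x : Fin r → V := fun i => (ex.symm i : V) with hxdef
    set y : Fin r → V := fun i => (ey.symm i : V) with hydef
    have hxinj : Function.Injective x := fun i j hij =>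
      ex.symm.injective (Subtype.ext hij)
    have hyinj : Function.Injective y := fun i j hij =>
      ey.symm.injective (Subtype.ext hij)
    have hxS : ∀ i, x i ∈ S := fun i => (ex.symm i).2
    have hyT : ∀ i, y i ∈ T := fun i => (ey.symm i).2
    rcases hdir with hdir | hdir
    · exact le_dib_of E ⟨_, (bcoloring_oneway hbip hsimple hr2 x y hxinj hyinj
        (fun i => hSA _ (hxS i)) (fun i => hTB _ (hyT i))
        (fun i j => hdir _ (hxS i) _ (hyT j))).choose_spec⟩ le_rfl
    · exact le_dib_of E ⟨_, (bcoloring_oneway (bip_symm hbip) hsimple hr2 y x hyinj hxinj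
        (fun i => hTB _ (hyT i)) (fun i => hSA _ (hxS i))
        (fun i j => hdir _ (hxS j) _ (hyT i))).choose_spec⟩ le_rfl
  · -- r = 1
    have hr1 : r = 1 := by omega
    subst hr1
    have hn1 : 1 ≤ n := by
      rcases Nat.eq_zero_or_pos n with h | h
      · rw [h] at hineq; norm_num at hineq
      · exact h
    have hAne : A.Nonempty := Set.nonempty_of_ncard_ne_zero (by omega)
    by_cases hcase : (∃ a ∈ A, ∃ b ∈ B, E a b) ∧ (∃ b ∈ B, ∃ a ∈ A, E b a)
    · obtain ⟨⟨a, haA, b, hbB, hab⟩, ⟨b', hb'B, a', ha'A, hba⟩⟩ := hcase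
      set Γ : V → Fin 2 := fun v => if v ∈ A then 0 else 1 with hΓdef
      have ΓmemA : ∀ v ∈ A, Γ v = 0 := fun v hv => if_pos hv
      have ΓmemB : ∀ v ∈ B, Γ v = 1 := fun v hv => if_neg (fun h => hnb v h hv)
      have fin2 : ∀ j : Fin 2, j ≠ 0 → j = 1 := by decide
      have fin2' : ∀ j : Fin 2, j ≠ 1 → j = 0 := by decide
      have hclass0 : ∀ v, Γ v = 0 → v ∈ A := by
        intro v hv
        by_contra h
        have : Γ v = 1 := if_neg h
        rw [this] at hv
        exact absurd hv (by decide)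
      have hclass1 : ∀ v, Γ v = 1 → v ∈ B := by
        intro v hv
        rcases hAB v with h | h
        · have : Γ v = 0 := if_pos h
          rw [this] at hv
          exact absurd hv (by decide)
        · exact h
      apply le_dib_of E (k := 2) ?_ (by omega)
      refine ⟨Γ, ?_, ?_⟩
      · intro i
        by_cases hi : i = 0
        · subst hi
          apply acyclic_oneB hbip hsimple _ a
          intro v hv hvB
          exact absurd hvB (fun h => hnb v (hclass0 v hv) h)
        · have hi1 : i = 1 := fin2 i hi
          subst hi1
          apply acyclic_oneB (bip_symm hbip) hsimple _ a
          intro v hv hvA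
          exact absurd hvA (fun h => hnb v h (hclass1 v hv))
      · intro i
        by_cases hi : i = 0
        · subst hi
          refine ⟨⟨a, ΓmemA a haA, ?_⟩, ⟨a', ΓmemA a' ha'A, ?_⟩⟩
          · intro j hj
            rw [ΓmemA a haA] at hj
            rw [fin2 j hj]
            exact ⟨b, hab, ΓmemB b hbB⟩
          · intro j hj
            rw [ΓmemA a' ha'A] at hj
            rw [fin2 j hj]
            exact ⟨b', hba, ΓmemB b' hb'B⟩
        · have hi1 : i = 1 := fin2 i hi
          subst hi1
          refine ⟨⟨b', ΓmemB b' hb'B, ?_⟩, ⟨b, ΓmemB b hbB, ?_⟩⟩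
          · intro j hj
            rw [ΓmemB b' hb'B] at hj
            rw [fin2' j hj]
            exact ⟨a', hba, ΓmemA a' ha'A⟩
          · intro j hj
            rw [ΓmemB b hbB] at hj
            rw [fin2' j hj]
            exact ⟨a, hab, ΓmemA a haA⟩
    · -- all arcs go in one direction: the whole digraph is acyclic
      have hone : (∀ a ∈ A, ∀ b ∈ B, ¬ E a b) ∨ (∀ b ∈ B, ∀ a ∈ A, ¬ E b a) := by
        by_cases hP : ∃ a ∈ A, ∃ b ∈ B, E a b
        · right
          intro b hb a ha hEba
          exact hcase ⟨hP, ⟨b, hb, a, ha, hEba⟩⟩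
        · left
          intro a ha b hb hEab
          exact hP ⟨a, ha, b, hb, hEab⟩
      have hacyc : AcyclicSet E {v | (fun _ : V => (0 : Fin 1)) v = 0} := by
        rintro ⟨n', c, _, he⟩
        have harc := hbip.2.2
        rcases hone with hone | hone
        · rcases harc _ _ (he 0) with ⟨h0A, h1B⟩ | ⟨h0B, h1A⟩
          · exact hone _ h0A _ h1B (he 0)
          · rcases harc _ _ (he (0 + 1)) with ⟨h1A', h2B⟩ | ⟨h1B', _⟩
            · exact hone _ h1A' _ h2B (he (0 + 1))
            · exact hnb _ h1A h1B'
        · rcases harc _ _ (he 0) with ⟨h0A, h1B⟩ | ⟨h0B, h1A⟩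
          · rcases harc _ _ (he (0 + 1)) with ⟨h1A', _⟩ | ⟨h1B', h2A⟩
            · exact hnb _ h1A' h1B
            · exact hone _ h1B' _ h2A (he (0 + 1))
          · exact hone _ h0B _ h1A (he 0)
      apply le_dib_of E (k := 1) ?_ le_rfl
      obtain ⟨u, hu⟩ := hAne
      refine ⟨fun _ => 0, ?_, ?_⟩
      · intro i
        have : i = 0 := Subsingleton.elim _ _
        subst this
        exact hacyc
      · intro i
        have hi : i = 0 := Subsingleton.elim _ _
        subst hi
        refine ⟨⟨u, rfl, ?_⟩, ⟨u, rfl, ?_⟩⟩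
        · intro j hj
          exact absurd (Subsingleton.elim j _) hj
        · intro j hj
          exact absurd (Subsingleton.elim j _) hj
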